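/- For every integer k ≥ 1, every finite simple graph with average degree at least 8k contains a (k+1)-connected bipartite subgraph. -/

import Mathlib

open Finset

section Helpers

variable {V : Type*} [Fintype V] [DecidableEq V] (B : SimpleGraph V) [DecidableRel B.Adj]

/-- Number of ordered adjacent pairs inside a finset `A`. -/
def dcnt (A : Finset V) : ℕ := ((A ×ˢ A).filter fun p => B.Adj p.1 p.2).card

lemma dcnt_le_sq (A : Finset V) : dcnt B A ≤ A.card * A.card := by
  calc dcnt B A ≤ (A ×ˢ A).card := card_filter_le _ _
    _ = A.card * A.card := card_product _ _

lemma dcnt_le_split {A A1 A2 : Finset V}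
    (h : ∀ x y, x ∈ A → y ∈ A → B.Adj x y → (x ∈ A1 ∧ y ∈ A1) ∨ (x ∈ A2 ∧ y ∈ A2)) :
    dcnt B A ≤ dcnt B A1 + dcnt B A2 := by
  calc ((A ×ˢ A).filter fun p => B.Adj p.1 p.2).card
      ≤ (((A1 ×ˢ A1).filter fun p => B.Adj p.1 p.2) ∪
          ((A2 ×ˢ A2).filter fun p => B.Adj p.1 p.2)).card := by
        apply card_le_card
        intro p hp
        simp only [mem_filter, mem_product, mem_union] at *
        rcases h p.1 p.2 hp.1.1 hp.1.2 hp.2 with h1 | h2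
        · exact Or.inl ⟨⟨h1.1, h1.2⟩, hp.2⟩
        · exact Or.inr ⟨⟨h2.1, h2.2⟩, hp.2⟩
    _ ≤ _ := card_union_le _ _

lemma dcnt_erase (A : Finset V) (v : V) :
    dcnt B A ≤ dcnt B (A.erase v) + 2 * (A.filter (B.Adj v)).card := by
  have hsub : (A ×ˢ A).filter (fun p => B.Adj p.1 p.2) ⊆
      ((A.erase v ×ˢ A.erase v).filter fun p => B.Adj p.1 p.2) ∪
        (({v} ×ˢ A.filter (B.Adj v)) ∪ (A.filter (B.Adj v) ×ˢ {v})) := by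
    intro p hp
    simp only [mem_filter, mem_product, mem_union, mem_erase, mem_singleton] at *
    obtain ⟨⟨h1, h2⟩, hadj⟩ := hp
    by_cases hx : p.1 = v
    · subst hx
      exact Or.inr (Or.inl ⟨rfl, h2, hadj⟩)
    by_cases hy : p.2 = v
    · subst hy
      exact Or.inr (Or.inr ⟨⟨h1, hadj.symm⟩, rfl⟩)
    · exact Or.inl ⟨⟨⟨hx, h1⟩, hy, h2⟩, hadj⟩
  calc dcnt B A ≤ _ := card_le_card hsub
    _ ≤ dcnt B (A.erase v) + (({v} ×ˢ A.filter (B.Adj v)).card +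
          (A.filter (B.Adj v) ×ˢ {v}).card) := le_trans (card_union_le _ _)
            (Nat.add_le_add_left (card_union_le _ _) _)
    _ = dcnt B (A.erase v) + 2 * (A.filter (B.Adj v)).card := by
        rw [card_product, card_product, card_singleton]
        ring

end Helpers

section Mader

variable {V : Type*} [Fintype V] [DecidableEq V]

lemma mader_aux {G B : SimpleGraph V} [DecidableRel B.Adj]
    (hBG : B ≤ G) (k : ℕ) (hk : 1 ≤ k) :
    ∀ A : Finset V, 2 * k ≤ A.card → 4 * k * A.card < dcnt B A + 4 * (k * k) →
    ∃ H : G.Subgraph, (∀ x y, H.Adj x y → B.Adj x y) ∧ k + 1 < H.verts.ncard ∧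
      ∀ S : Set V, S ⊆ H.verts → S.ncard ≤ k → (H.deleteVerts S).coe.Connected := by
  intro A
  induction A using Finset.strongInductionOn with
  | _ A ih =>
  intro hcard hdens
  classical
  by_cases hmin : ∃ v ∈ A, (A.filter (B.Adj v)).card ≤ 2 * k
  · -- delete a low-degree vertex
    obtain ⟨v, hvA, hvdeg⟩ := hmin
    have hsq := dcnt_le_sq B A
    have hAcard : 2 * k + 1 ≤ A.card := by
      by_contra hlt
      have h2 : A.card = 2 * k := by omega
      rw [h2] at hsq hdens
      nlinarith
    have hkey := dcnt_erase B A v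
    have hcard' : A.card - 1 = (A.erase v).card := (card_erase_of_mem hvA).symm
    refine ih (A.erase v) (erase_ssubset hvA) (by omega) ?_
    obtain ⟨m, hm⟩ : ∃ m, A.card = m + 1 := ⟨A.card - 1, by omega⟩
    have hem : (A.erase v).card = m := by omega
    have e1 : 4 * k * A.card = 4 * k * (A.erase v).card + 4 * k := by
      rw [hm, hem]; ring
    nlinarith
  · -- minimum degree at least 2k+1
    push_neg at hmin
    obtain ⟨v0, hv0⟩ := Finset.card_pos.mp (by omega : 0 < A.card)
    have hdegbig : ∀ v ∈ A, 2 * k + 1 ≤ (A.filter (B.Adj v)).card := fun v hv => hmin v hv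
    have hAbig : 2 * k + 2 ≤ A.card := by
      have h1 : insert v0 (A.filter (B.Adj v0)) ⊆ A := by
        intro x hx
        rcases Finset.mem_insert.mp hx with rfl | hx
        · exact hv0
        · exact (mem_filter.mp hx).1
      have h2 : v0 ∉ A.filter (B.Adj v0) := by
        simp [B.loopless.irrefl v0]
      have := card_le_card h1
      rw [card_insert_of_notMem h2] at this
      have := hdegbig v0 hv0
      omega
    -- the candidate subgraph
    set H : G.Subgraph :=
      { verts := ↑A
        Adj := fun x y => x ∈ A ∧ y ∈ A ∧ B.Adj x y
        adj_sub := fun h => hBG h.2.2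
        edge_vert := fun h => h.1
        symm := ⟨fun x y h => ⟨h.2.1, h.1, h.2.2.symm⟩⟩ } with hHdef
    by_cases hconn : ∀ S : Set V, S ⊆ H.verts → S.ncard ≤ k → (H.deleteVerts S).coe.Connected
    · refine ⟨H, fun x y h => h.2.2, ?_, hconn⟩
      have : H.verts.ncard = A.card := Set.ncard_coe_finset A
      omega
    · push_neg at hconn
      obtain ⟨S, hSsub, hScard, hnc⟩ := hconn
      have hSfin : S.Finite := A.finite_toSet.subset hSsub
      set St : Finset V := hSfin.toFinset with hStdef
      have hStcard : St.card ≤ k := by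
        rwa [← Set.ncard_eq_toFinset_card S hSfin]
      have hStA : St ⊆ A := by
        intro x hx
        exact hSsub (hSfin.mem_toFinset.mp hx)
      have hmemSt : ∀ x, x ∈ St ↔ x ∈ S := fun x => hSfin.mem_toFinset
      -- nonempty vertex set after deletion
      have hnonempty : Nonempty ((H.deleteVerts S).verts) := by
        have : 0 < (A \ St).card := by
          have := card_sdiff_of_subset hStA
          omega
        obtain ⟨x, hx⟩ := Finset.card_pos.mp this
        rw [mem_sdiff] at hx
        exact ⟨⟨x, by
          simp only [SimpleGraph.Subgraph.deleteVerts_verts, Set.mem_diff]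
          exact ⟨hx.1, fun hxS => hx.2 ((hmemSt x).mpr hxS)⟩⟩⟩
      have hnp : ¬ (H.deleteVerts S).coe.Preconnected := by
        intro hp
        exact hnc ⟨hp⟩
      rw [SimpleGraph.Preconnected] at hnp
      push_neg at hnp
      obtain ⟨u, v, huv⟩ := hnp
      -- reachability component of u
      set C : Finset V := A.filter (fun w =>
        ∃ hw : w ∈ (H.deleteVerts S).verts, (H.deleteVerts S).coe.Reachable u ⟨w, hw⟩)
        with hCdef
      have hCA : C ⊆ A := by rw [hCdef]; exact filter_subset _ _
      have hCnS : ∀ w ∈ C, w ∉ St := by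
        intro w hw hwS
        obtain ⟨hw', _⟩ := (mem_filter.mp hw).2
        simp only [SimpleGraph.Subgraph.deleteVerts_verts, Set.mem_diff] at hw'
        exact hw'.2 ((hmemSt w).mp hwS)
      have huvert := u.2
      have hvvert := v.2
      simp only [SimpleGraph.Subgraph.deleteVerts_verts, Set.mem_diff] at huvert hvvert
      have huA : (u : V) ∈ A := huvert.1
      have hvA : (v : V) ∈ A := hvvert.1
      have huC : (u : V) ∈ C := by
        rw [hCdef, mem_filter]
        exact ⟨huA, u.2, by rw [Subtype.coe_eta]⟩
      have hvC : (v : V) ∉ C := by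
        rw [hCdef, mem_filter]
        rintro ⟨-, hv', hre⟩
        exact huv (by rwa [Subtype.coe_eta] at hre)
      -- closure of C under adjacency within A \ S
      have hclo : ∀ w ∈ C, ∀ x ∈ A, x ∉ St → B.Adj w x → x ∈ C := by
        intro w hw x hxA hxS hadj
        obtain ⟨hwA, hw', hre⟩ := mem_filter.mp hw
        have hxv : x ∈ (H.deleteVerts S).verts := by
          simp only [SimpleGraph.Subgraph.deleteVerts_verts, Set.mem_diff]
          exact ⟨hxA, fun h => hxS ((hmemSt x).mpr h)⟩
        have hadj' : (H.deleteVerts S).coe.Adj ⟨w, hw'⟩ ⟨x, hxv⟩ := by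
          simp only [SimpleGraph.Subgraph.coe_adj, SimpleGraph.Subgraph.deleteVerts_adj]
          have hw'' := hw'
          simp only [SimpleGraph.Subgraph.deleteVerts_verts, Set.mem_diff] at hw''
          exact ⟨hw''.1, hw''.2, hxA, fun h => hxS ((hmemSt x).mpr h),
            hwA, hxA, hadj⟩
        rw [hCdef, mem_filter]
        exact ⟨hxA, hxv, hre.trans hadj'.reachable⟩
      set D : Finset V := (A \ St) \ C with hDdef
      set A1 : Finset V := C ∪ St with hA1def
      set A2 : Finset V := D ∪ St with hA2def
      have hA1A : A1 ⊆ A := union_subset hCA hStA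
      have hA2A : A2 ⊆ A := union_subset ((sdiff_subset).trans sdiff_subset) hStA
      have hvD : (v : V) ∈ D := by
        rw [hDdef, mem_sdiff, mem_sdiff]
        exact ⟨⟨hvA, fun h => hvvert.2 ((hmemSt _).mp h)⟩, hvC⟩
      have hvA1 : (v : V) ∉ A1 := by
        rw [hA1def, mem_union]
        rintro (h | h)
        · exact hvC h
        · exact hvvert.2 ((hmemSt _).mp h)
      have huA2 : (u : V) ∉ A2 := by
        rw [hA2def, mem_union]
        rintro (h | h)
        · rw [hDdef, mem_sdiff] at h
          exact h.2 huC
        · exact huvert.2 ((hmemSt _).mp h)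
      have hA1ss : A1 ⊂ A := ssubset_iff_of_subset hA1A |>.mpr ⟨v, hvA, hvA1⟩
      have hA2ss : A2 ⊂ A := ssubset_iff_of_subset hA2A |>.mpr ⟨u, huA, huA2⟩
      -- split property
      have hsplit : ∀ x y, x ∈ A → y ∈ A → B.Adj x y →
          (x ∈ A1 ∧ y ∈ A1) ∨ (x ∈ A2 ∧ y ∈ A2) := by
        intro x y hxA hyA hadj
        by_cases hxS : x ∈ St
        · by_cases hyS : y ∈ St
          · exact Or.inl ⟨mem_union_right _ hxS, mem_union_right _ hyS⟩
          · by_cases hyC : y ∈ C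
            · exact Or.inl ⟨mem_union_right _ hxS, mem_union_left _ hyC⟩
            · refine Or.inr ⟨mem_union_right _ hxS, mem_union_left _ ?_⟩
              rw [hDdef, mem_sdiff, mem_sdiff]
              exact ⟨⟨hyA, hyS⟩, hyC⟩
        · by_cases hyS : y ∈ St
          · by_cases hxC : x ∈ C
            · exact Or.inl ⟨mem_union_left _ hxC, mem_union_right _ hyS⟩
            · refine Or.inr ⟨mem_union_left _ ?_, mem_union_right _ hyS⟩
              rw [hDdef, mem_sdiff, mem_sdiff]
              exact ⟨⟨hxA, hxS⟩, hxC⟩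
          · by_cases hxC : x ∈ C
            · exact Or.inl ⟨mem_union_left _ hxC,
                mem_union_left _ (hclo x hxC y hyA hyS hadj)⟩
            · have hyC : y ∉ C := fun hyC => hxC (hclo y hyC x hxA hxS hadj.symm)
              refine Or.inr ⟨mem_union_left _ ?_, mem_union_left _ ?_⟩
              · rw [hDdef, mem_sdiff, mem_sdiff]; exact ⟨⟨hxA, hxS⟩, hxC⟩
              · rw [hDdef, mem_sdiff, mem_sdiff]; exact ⟨⟨hyA, hyS⟩, hyC⟩
      have hsplitcnt := dcnt_le_split B hsplit
      -- cardinality bounds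
      have hCD : C ∩ St = ∅ := by
        rw [eq_empty_iff_forall_notMem]
        intro x hx
        rw [mem_inter] at hx
        exact hCnS x hx.1 hx.2
      have hCsub : C ⊆ A \ St := by
        intro x hx
        rw [mem_sdiff]
        exact ⟨hCA hx, hCnS x hx⟩
      have hcards : A1.card + A2.card ≤ A.card + k := by
        have h1 : A1.card ≤ C.card + St.card := card_union_le _ _
        have h2 : A2.card ≤ D.card + St.card := card_union_le _ _
        have h3 : D.card = (A \ St).card - C.card := card_sdiff_of_subset hCsub
        have h4 : (A \ St).card = A.card - St.card := card_sdiff_of_subset hStA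
        have h5 : C.card ≤ (A \ St).card := card_le_card hCsub
        have h6 : St.card ≤ A.card := card_le_card hStA
        omega
      -- lower bounds on sizes
      have hnbr1 : insert (u : V) (A.filter (B.Adj u)) ⊆ A1 := by
        intro x hx
        rcases mem_insert.mp hx with rfl | hx
        · exact mem_union_left _ huC
        · obtain ⟨hxA, hadj⟩ := mem_filter.mp hx
          by_cases hxS : x ∈ St
          · exact mem_union_right _ hxS
          · exact mem_union_left _ (hclo u huC x hxA hxS hadj)
      have hnbr2 : insert (v : V) (A.filter (B.Adj v)) ⊆ A2 := by
        intro x hx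
        rcases mem_insert.mp hx with rfl | hx
        · exact mem_union_left _ hvD
        · obtain ⟨hxA, hadj⟩ := mem_filter.mp hx
          by_cases hxS : x ∈ St
          · exact mem_union_right _ hxS
          · refine mem_union_left _ ?_
            rw [hDdef, mem_sdiff, mem_sdiff]
            refine ⟨⟨hxA, hxS⟩, fun hxC => hvC ?_⟩
            exact hclo x hxC v hvA (fun h => hvvert.2 ((hmemSt _).mp h)) hadj.symm
      have hA1big : 2 * k ≤ A1.card := by
        have h1 := card_le_card hnbr1
        rw [card_insert_of_notMem (by simp [B.loopless.irrefl])] at h1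
        have := hdegbig u huA
        omega
      have hA2big : 2 * k ≤ A2.card := by
        have h1 := card_le_card hnbr2
        rw [card_insert_of_notMem (by simp [B.loopless.irrefl])] at h1
        have := hdegbig v hvA
        omega
      -- one of the two pieces is dense
      by_cases hd1 : 4 * k * A1.card < dcnt B A1 + 4 * (k * k)
      · exact ih A1 hA1ss hA1big hd1
      · refine ih A2 hA2ss hA2big ?_
        by_contra hd2
        push_neg at hd1 hd2
        have hmul : 4 * k * (A1.card + A2.card) ≤ 4 * k * (A.card + k) :=
          Nat.mul_le_mul_left _ hcards
        have e1 : 4 * k * (A1.card + A2.card) = 4 * k * A1.card + 4 * k * A2.card := by ring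
        have e2 : 4 * k * (A.card + k) = 4 * k * A.card + 4 * (k * k) := by ring
        omega

end Mader

section MaxCut

variable {V : Type*} [Fintype V] [DecidableEq V]

lemma exists_maxcut (G : SimpleGraph V) [DecidableRel G.Adj] :
    ∃ c : V → Bool, G.edgeFinset.card ≤
      (((univ : Finset V) ×ˢ univ).filter fun p => G.Adj p.1 p.2 ∧ c p.1 ≠ c p.2).card := by
  classical
  set T : Finset (V × V) := (univ ×ˢ univ).filter fun p => G.Adj p.1 p.2 with hTdef
  have hT : T.card = 2 * G.edgeFinset.card := by
    rw [← SimpleGraph.dart_card_eq_twice_card_edges]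
    rw [← Fintype.card_coe]
    apply Fintype.card_congr
    refine ⟨fun p => ⟨p.1, by
        have := p.2
        simp only [hTdef, mem_filter, mem_product] at this
        exact this.2⟩,
      fun d => ⟨d.toProd, by
        simp only [hTdef, mem_filter, mem_product]
        exact ⟨⟨mem_univ _, mem_univ _⟩, d.adj⟩⟩, fun p => rfl, fun d => rfl⟩
  have hhalf : ∀ p ∈ T, 2 * ((univ : Finset (V → Bool)).filter
      fun c => c p.1 ≠ c p.2).card = 2 ^ Fintype.card V := by
    intro p hp
    have hadj : G.Adj p.1 p.2 := by
      simp only [hTdef, mem_filter, mem_product] at hp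
      exact hp.2
    have hne : p.1 ≠ p.2 := hadj.ne
    have hbij : ((univ : Finset (V → Bool)).filter fun c => c p.1 ≠ c p.2).card =
        ((univ : Finset (V → Bool)).filter fun c => ¬ (c p.1 ≠ c p.2)).card := by
      refine Finset.card_bij' (fun c _ => Function.update c p.1 (!(c p.1)))
        (fun c _ => Function.update c p.1 (!(c p.1))) ?_ ?_ ?_ ?_
      · intro c hc
        simp only [mem_filter, mem_univ, true_and] at hc ⊢
        rw [Function.update_self, Function.update_of_ne hne.symm]
        revert hc
        cases c p.1 <;> cases c p.2 <;> simp
      · intro c hc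
        simp only [mem_filter, mem_univ, true_and] at hc ⊢
        rw [Function.update_self, Function.update_of_ne hne.symm]
        revert hc
        cases c p.1 <;> cases c p.2 <;> simp
      · intro c _
        funext x
        by_cases hx : x = p.1
        · subst hx
          simp
        · simp [Function.update_of_ne hx]
      · intro c _
        funext x
        by_cases hx : x = p.1
        · subst hx
          simp
        · simp [Function.update_of_ne hx]
    have hsum := Finset.card_filter_add_card_filter_not
      (s := (univ : Finset (V → Bool))) (fun c => c p.1 ≠ c p.2)
    rw [card_univ, Fintype.card_fun, Fintype.card_bool] at hsum
    rw [two_mul]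
    nth_rewrite 2 [hbij]
    exact hsum
  -- total sum over all colourings
  have hsum2 : 2 * ∑ c : V → Bool, (T.filter fun p => c p.1 ≠ c p.2).card =
      2 ^ Fintype.card V * T.card := by
    have : ∀ c : V → Bool, (T.filter fun p => c p.1 ≠ c p.2).card =
        ∑ p ∈ T, if c p.1 ≠ c p.2 then 1 else 0 := by
      intro c
      rw [Finset.card_filter]
    simp_rw [this, Finset.mul_sum]
    rw [Finset.sum_comm]
    have : ∀ p ∈ T, ∑ c : V → Bool, 2 * (if c p.1 ≠ c p.2 then 1 else 0) =
        2 ^ Fintype.card V := by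
      intro p hp
      rw [← Finset.mul_sum, ← Finset.card_filter]
      exact hhalf p hp
    rw [Finset.sum_congr rfl this, Finset.sum_const, smul_eq_mul, mul_comm]
  by_contra hcon
  push_neg at hcon
  have hlt : ∀ c : V → Bool, (T.filter fun p => c p.1 ≠ c p.2).card < G.edgeFinset.card := by
    intro c
    have := hcon c
    have heq : (((univ : Finset V) ×ˢ univ).filter fun p => G.Adj p.1 p.2 ∧ c p.1 ≠ c p.2) =
        T.filter fun p => c p.1 ≠ c p.2 := by
      rw [hTdef, Finset.filter_filter]
    rwa [heq] at this
  have hstrict : ∑ c : V → Bool, (T.filter fun p => c p.1 ≠ c p.2).card <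
      ∑ _c : V → Bool, G.edgeFinset.card :=
    Finset.sum_lt_sum_of_nonempty univ_nonempty (fun c _ => hlt c)
  rw [Finset.sum_const, card_univ, Fintype.card_fun, Fintype.card_bool, smul_eq_mul] at hstrict
  obtain ⟨P, hP⟩ : ∃ P, (2 : ℕ) ^ Fintype.card V = P := ⟨_, rfl⟩
  rw [hP] at hsum2 hstrict
  have hPP : P * T.card = 2 * (P * G.edgeFinset.card) := by rw [hT]; ring
  linarith

end MaxCut

/-- For every integer `k ≥ 1`, every finite simple graph with average degree at least `8k`
(i.e. `2|E| ≥ 8k·|V|`) contains a `(k+1)`-connected bipartite subgraph: a bipartite subgraph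
on more than `k+1` vertices that stays connected after deleting any set of at most `k` vertices. -/
theorem stmt4 {V : Type*} [Fintype V] [Nonempty V] (k : ℕ) (hk : 1 ≤ k)
    (G : SimpleGraph V) (h : 8 * k * Fintype.card V ≤ 2 * G.edgeSet.ncard) :
    ∃ H : G.Subgraph, H.coe.Colorable 2 ∧ k + 1 < H.verts.ncard ∧
      ∀ S : Set V, S ⊆ H.verts → S.ncard ≤ k → (H.deleteVerts S).coe.Connected := by
  classical
  set n := Fintype.card V with hn
  have hE : G.edgeSet.ncard = G.edgeFinset.card := by
    rw [Set.ncard_eq_toFinset_card']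
    congr 1
  rw [hE] at h
  -- bound: 2m ≤ n^2
  have h2m : 2 * G.edgeFinset.card ≤ n * n := by
    rw [← SimpleGraph.sum_degrees_eq_twice_card_edges]
    calc ∑ v, G.degree v ≤ ∑ _v : V, n := by
          apply Finset.sum_le_sum
          intro i _
          exact le_of_lt (G.degree_lt_card_verts i)
      _ = n * n := by rw [Finset.sum_const, card_univ, smul_eq_mul]
  have hn1 : 1 ≤ n := Fintype.card_pos
  have h8k : 8 * k ≤ n := by
    have : 8 * k * n ≤ n * n := le_trans h h2m
    exact Nat.le_of_mul_le_mul_right (by rwa [mul_comm (8*k) n, mul_comm n n] at this) (by omega)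
  obtain ⟨c, hc⟩ := exists_maxcut G
  set B : SimpleGraph V :=
    { Adj := fun x y => G.Adj x y ∧ c x ≠ c y
      symm := ⟨fun x y h => ⟨h.1.symm, fun he => h.2 he.symm⟩⟩
      loopless := ⟨fun x h => G.loopless.irrefl x h.1⟩ } with hBdef
  have hBG : B ≤ G := fun _ _ h => h.1
  have hdcnt : dcnt B univ =
      (((univ : Finset V) ×ˢ univ).filter fun p => G.Adj p.1 p.2 ∧ c p.1 ≠ c p.2).card := by
    unfold dcnt
    congr 1
  have hmain := mader_aux (B := B) (G := G) hBG k hk univ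
    (by rw [card_univ]; omega)
    (by
      rw [card_univ, ← hn, hdcnt]
      have h4kn : 4 * k * n ≤ G.edgeFinset.card := by
        have h2 : 2 * (4 * k * n) ≤ 2 * G.edgeFinset.card := by
          calc 2 * (4 * k * n) = 8 * k * n := by ring
            _ ≤ _ := h
        exact Nat.le_of_mul_le_mul_left h2 (by norm_num)
      have hle := le_trans h4kn hc
      have hpos : 0 < 4 * (k * k) := by positivity
      linarith)
  obtain ⟨H, hHB, hHcard, hHconn⟩ := hmain
  refine ⟨H, ?_, hHcard, hHconn⟩
  exact ⟨SimpleGraph.Coloring.mk (fun w => if c w.1 then 0 else 1)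
    (by
      intro a b hab
      have hadj : B.Adj a b := hHB _ _ hab
      have hne : c a.1 ≠ c b.1 := hadj.2
      cases ha : c a.1 <;> cases hb : c b.1 <;> simp_all)⟩
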